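/- Let δ > 0 and let p_1, …, p_n be i.i.d. random variables with values in [0,1] whose common law has a density f with respect to Lebesgue measure satisfying f(1−x) = 1 + O(x^{δ}) as x → 0+. Set S_n = ∑_{i=1}^n 1/(1 − p_i). Then for every ε > 0, P(|S_n/(n log n) − 1| > ε) → 0 as n → ∞. -/

import Mathlib

open MeasureTheory ProbabilityTheory Filter Asymptotics
open Set Topology


lemma sub_lintegral (g : ℝ → ENNReal) (a b : ℝ) :
    ∫⁻ x in Ioo a b, g x = ∫⁻ u in Ioo (1-b) (1-a), g (1-u) := by
  have hmp : Measure.map (fun u : ℝ => 1 - u) volume = volume :=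
    Measure.map_sub_left_eq_self volume 1
  have he : (fun u : ℝ => 1 - u) = (MeasurableEquiv.subLeft (1:ℝ)) := rfl
  calc ∫⁻ x in Ioo a b, g x
      = ∫⁻ x, g x ∂((Measure.map (MeasurableEquiv.subLeft (1:ℝ)) volume).restrict (Ioo a b)) := by
        rw [← he, hmp]
    _ = ∫⁻ x, g x ∂(Measure.map (MeasurableEquiv.subLeft (1:ℝ))
          (volume.restrict ((MeasurableEquiv.subLeft (1:ℝ)) ⁻¹' (Ioo a b)))) := by
        rw [Measure.restrict_map (MeasurableEquiv.subLeft (1:ℝ)).measurable measurableSet_Ioo]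
    _ = ∫⁻ u in ((MeasurableEquiv.subLeft (1:ℝ)) ⁻¹' (Ioo a b)), g ((MeasurableEquiv.subLeft (1:ℝ)) u) := by
        rw [lintegral_map_equiv]
    _ = ∫⁻ u in Ioo (1-b) (1-a), g (1-u) := by
        have hpre : (MeasurableEquiv.subLeft (1:ℝ)) ⁻¹' (Ioo a b) = Ioo (1-b) (1-a) := by
          ext u
          simp only [MeasurableEquiv.subLeft, Equiv.subLeft, MeasurableEquiv.coe_mk,
            Equiv.coe_fn_mk, mem_preimage, mem_Ioo]
          constructor <;> intro h <;> exact ⟨by linarith [h.1, h.2], by linarith [h.1, h.2]⟩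
        rw [hpre]
        rfl

lemma lint_mono_on (s : Set ℝ) (hs : MeasurableSet s) (g h : ℝ → ENNReal)
    (hb : ∀ u ∈ s, g u ≤ h u) : ∫⁻ u in s, g u ≤ ∫⁻ u in s, h u := by
  rw [← lintegral_indicator hs, ← lintegral_indicator hs]
  apply lintegral_mono
  intro u
  by_cases hu : u ∈ s
  · simpa [hu] using hb u hu
  · simp [hu]

lemma tail_bound (ν : Measure ℝ) (f : ℝ → ℝ)
    (hf : ν = volume.withDensity (fun x => ENNReal.ofReal (f x)))
    (η t₀ : ℝ) (ht₀ : 0 < t₀)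
    (hb : ∀ u ∈ Ioo (0:ℝ) t₀, |f (1 - u) - 1| ≤ η) :
    ∀ s ∈ Ioc (0:ℝ) t₀, ENNReal.ofReal ((1-η)*s) ≤ ν (Ioo (1-s) 1)
      ∧ ν (Ioo (1-s) 1) ≤ ENNReal.ofReal ((1+η)*s) := by
  intro s hs
  obtain ⟨hs0, hst⟩ := hs
  have hrepr : ν (Ioo (1-s) 1) = ∫⁻ u in Ioo 0 s, ENNReal.ofReal (f (1-u)) := by
    rw [hf, withDensity_apply _ measurableSet_Ioo, sub_lintegral]
    norm_num
  have hsub : Ioo (0:ℝ) s ⊆ Ioo 0 t₀ := Ioo_subset_Ioo le_rfl hst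
  constructor
  · rw [hrepr]
    calc ENNReal.ofReal ((1-η)*s) = ENNReal.ofReal (1-η) * volume (Ioo (0:ℝ) s) := by
          rw [Real.volume_Ioo, ENNReal.ofReal_mul' (le_of_lt hs0)]
          norm_num
      _ = ∫⁻ _ in Ioo (0:ℝ) s, ENNReal.ofReal (1-η) := (setLIntegral_const _ _).symm
      _ ≤ ∫⁻ u in Ioo (0:ℝ) s, ENNReal.ofReal (f (1-u)) := by
          apply lint_mono_on _ measurableSet_Ioo
          intro u hu
          have := hb u (hsub hu)
          exact ENNReal.ofReal_le_ofReal (by cases abs_le.mp this; linarith)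
  · rw [hrepr]
    calc ∫⁻ u in Ioo (0:ℝ) s, ENNReal.ofReal (f (1-u))
        ≤ ∫⁻ _ in Ioo (0:ℝ) s, ENNReal.ofReal (1+η) := by
          apply lint_mono_on _ measurableSet_Ioo
          intro u hu
          have := hb u (hsub hu)
          exact ENNReal.ofReal_le_ofReal (by cases abs_le.mp this; linarith)
      _ = ENNReal.ofReal (1+η) * volume (Ioo (0:ℝ) s) := setLIntegral_const _ _
      _ = ENNReal.ofReal ((1+η)*s) := by
          rw [Real.volume_Ioo, ENNReal.ofReal_mul' (le_of_lt hs0)]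
          norm_num

set_option maxHeartbeats 1000000 in
lemma mean_bound (ν : Measure ℝ) [IsProbabilityMeasure ν]
    (hsupp : ∀ᵐ x ∂ν, x ∈ Icc (0:ℝ) 1)
    (K T₀ η : ℝ) (hT₀ : 1 ≤ T₀) (hK : T₀ ≤ K) (hη : 0 ≤ η) (hη1 : η ≤ 1)
    (htail : ∀ t, T₀ ≤ t → t < K →
      ENNReal.ofReal ((1-η)/t) ≤ ν {x | t < min (1-x)⁻¹ K} ∧
      ν {x | t < min (1-x)⁻¹ K} ≤ ENNReal.ofReal ((1+η)/t)) :
    (1-η) * (Real.log K - Real.log T₀) ≤ ∫ x, min (1-x)⁻¹ K ∂ν ∧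
      ∫ x, min (1-x)⁻¹ K ∂ν ≤ T₀ + (1+η) * (Real.log K - Real.log T₀) := by
  have hK0 : (0:ℝ) < K := lt_of_lt_of_le (lt_of_lt_of_le one_pos hT₀) hK
  have hT₀0 : (0:ℝ) < T₀ := lt_of_lt_of_le one_pos hT₀
  set Y : ℝ → ℝ := fun x => min (1-x)⁻¹ K with hYdef
  have hYm : Measurable Y := ((measurable_const.sub measurable_id).inv).min measurable_const
  have hY0 : ∀ᵐ x ∂ν, 0 ≤ Y x := by
    filter_upwards [hsupp] with x hx
    exact le_min (inv_nonneg.mpr (by linarith [hx.2])) (le_of_lt hK0)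
  have hYK : ∀ x, Y x ≤ K := fun x => min_le_right _ _
  have hInt : Integrable Y ν := by
    apply Integrable.mono' (integrable_const K) hYm.aestronglyMeasurable
    filter_upwards [hY0] with x hx
    rw [Real.norm_eq_abs, abs_of_nonneg hx]
    exact hYK x
  have hlayer : ∫ x, Y x ∂ν = ∫ t in Ioi 0, (ν {a | t < Y a}).toReal :=
    hInt.integral_eq_integral_meas_lt hY0
  set G : ℝ → ℝ := fun t => (ν {a | t < Y a}).toReal with hGdef
  have hGanti : Antitone G := by
    intro s t hst
    exact ENNReal.toReal_mono (measure_ne_top _ _)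
      (measure_mono (fun a ha => lt_of_le_of_lt hst ha))
  have hGm : Measurable G := hGanti.measurable
  have hG0 : ∀ t, 0 ≤ G t := fun t => ENNReal.toReal_nonneg
  have hG1 : ∀ t, G t ≤ 1 := by
    intro t
    have := prob_le_one (μ := ν) (s := {a | t < Y a})
    simpa using ENNReal.toReal_mono (by simp) this
  have hGK : ∀ t, K ≤ t → G t = 0 := by
    intro t ht
    have : {a | t < Y a} = ∅ := by
      ext a
      simp only [mem_setOf_eq, mem_empty_iff_false, iff_false, not_lt]
      exact le_trans (hYK a) ht
    simp [hGdef, this]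
  have hGtail : ∀ t, T₀ ≤ t → t < K → (1-η)/t ≤ G t ∧ G t ≤ (1+η)/t := by
    intro t ht htK
    have ht0 : (0:ℝ) < t := lt_of_lt_of_le hT₀0 ht
    obtain ⟨h1, h2⟩ := htail t ht htK
    constructor
    · calc (1-η)/t = (ENNReal.ofReal ((1-η)/t)).toReal := by
            rw [ENNReal.toReal_ofReal (div_nonneg (by linarith) (le_of_lt ht0))]
        _ ≤ G t := ENNReal.toReal_mono (measure_ne_top _ _) h1
    · exact ENNReal.toReal_le_of_le_ofReal (div_nonneg (by linarith) (le_of_lt ht0)) h2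
  haveI hfin1 : IsFiniteMeasure (volume.restrict (Ioc (0:ℝ) T₀)) :=
    ⟨by rw [Measure.restrict_apply_univ]; exact measure_Ioc_lt_top⟩
  haveI hfin2 : IsFiniteMeasure (volume.restrict (Ioc T₀ K)) :=
    ⟨by rw [Measure.restrict_apply_univ]; exact measure_Ioc_lt_top⟩
  have hIntG : ∀ s : Set ℝ, IsFiniteMeasure (volume.restrict s) → IntegrableOn G s := by
    intro s hs
    apply Integrable.mono' (integrable_const 1) hGm.aestronglyMeasurable
    filter_upwards with t
    rw [Real.norm_eq_abs, abs_of_nonneg (hG0 t)]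
    exact hG1 t
  have hIntG1 : IntegrableOn G (Ioc (0:ℝ) T₀) := hIntG _ hfin1
  have hIntG2 : IntegrableOn G (Ioc T₀ K) := hIntG _ hfin2
  have hIntG3 : IntegrableOn G (Ioi K) := by
    have heq : EqOn G (fun _ : ℝ => (0:ℝ)) (Ioi K) := fun t ht => hGK t (le_of_lt ht)
    exact (integrableOn_congr_fun heq measurableSet_Ioi).mpr integrableOn_zero
  haveI hfin3 : IsFiniteMeasure (volume.restrict (Ioc (0:ℝ) K)) :=
    ⟨by rw [Measure.restrict_apply_univ]; exact measure_Ioc_lt_top⟩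
  have hIntGK : IntegrableOn G (Ioc (0:ℝ) K) := hIntG _ hfin3
  have hsplitA : ∫ t in Ioi (0:ℝ), G t = (∫ t in Ioc (0:ℝ) K, G t) + ∫ t in Ioi K, G t := by
    rw [← Ioc_union_Ioi_eq_Ioi (le_of_lt hK0)]
    exact setIntegral_union Ioc_disjoint_Ioi_same measurableSet_Ioi hIntGK hIntG3
  have hsplitB : ∫ t in Ioc (0:ℝ) K, G t
      = (∫ t in Ioc (0:ℝ) T₀, G t) + ∫ t in Ioc T₀ K, G t := by
    rw [← Ioc_union_Ioc_eq_Ioc (le_of_lt hT₀0) hK]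
    exact setIntegral_union (Ioc_disjoint_Ioc_of_le le_rfl) measurableSet_Ioc hIntG1 hIntG2
  have hsplit : ∫ t in Ioi (0:ℝ), G t
      = (∫ t in Ioc (0:ℝ) T₀, G t) + (∫ t in Ioc T₀ K, G t) + ∫ t in Ioi K, G t := by
    rw [hsplitA, hsplitB]
  have hzero3 : ∫ t in Ioi K, G t = 0 := by
    rw [setIntegral_congr_fun measurableSet_Ioi (fun t ht => hGK t (le_of_lt ht))]
    exact integral_zero _ _
  have hB1u : ∫ t in Ioc (0:ℝ) T₀, G t ≤ T₀ := by
    calc ∫ t in Ioc (0:ℝ) T₀, G t ≤ ∫ _ in Ioc (0:ℝ) T₀, (1:ℝ) :=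
          setIntegral_mono_on hIntG1 (integrable_const 1) measurableSet_Ioc (fun t _ => hG1 t)
      _ = T₀ := by
          simp [Real.volume_Ioc, ENNReal.toReal_ofReal (le_of_lt hT₀0), hT₀0.le]
  have hB1l : 0 ≤ ∫ t in Ioc (0:ℝ) T₀, G t :=
    setIntegral_nonneg measurableSet_Ioc (fun t _ => hG0 t)
  have hIoc_eq : ∀ c : ℝ, ∫ t in Ioc T₀ K, c * t⁻¹ = c * (Real.log K - Real.log T₀) := by
    intro c
    rw [← intervalIntegral.integral_of_le hK, intervalIntegral.integral_const_mul,
      integral_inv_of_pos hT₀0 hK0, Real.log_div (ne_of_gt hK0) (ne_of_gt hT₀0)]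
  have hIntc : ∀ c : ℝ, IntegrableOn (fun t => c * t⁻¹) (Ioc T₀ K) := by
    intro c
    have hc : ContinuousOn (fun t : ℝ => c * t⁻¹) (Icc T₀ K) := by
      apply continuousOn_const.mul (continuousOn_inv₀.mono _)
      intro t ht
      exact ne_of_gt (lt_of_lt_of_le hT₀0 ht.1)
    exact (hc.integrableOn_compact isCompact_Icc).mono_set Ioc_subset_Icc_self
  have hB2u : ∫ t in Ioc T₀ K, G t ≤ (1+η) * (Real.log K - Real.log T₀) := by
    rw [← hIoc_eq (1+η)]
    rw [integral_Ioc_eq_integral_Ioo, integral_Ioc_eq_integral_Ioo]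
    apply setIntegral_mono_on (hIntG2.mono_set Ioo_subset_Ioc_self)
      ((hIntc (1+η)).mono_set Ioo_subset_Ioc_self) measurableSet_Ioo
    intro t ht
    rw [← div_eq_mul_inv]
    exact (hGtail t (le_of_lt ht.1) ht.2).2
  have hB2l : (1-η) * (Real.log K - Real.log T₀) ≤ ∫ t in Ioc T₀ K, G t := by
    rw [← hIoc_eq (1-η)]
    rw [integral_Ioc_eq_integral_Ioo, integral_Ioc_eq_integral_Ioo]
    apply setIntegral_mono_on ((hIntc (1-η)).mono_set Ioo_subset_Ioc_self)
      (hIntG2.mono_set Ioo_subset_Ioc_self) measurableSet_Ioo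
    intro t ht
    rw [← div_eq_mul_inv]
    exact (hGtail t (le_of_lt ht.1) ht.2).1
  rw [hYdef] at hlayer
  constructor
  · rw [hlayer, hsplit, hzero3]
    linarith
  · rw [hlayer, hsplit, hzero3]
    linarith

lemma set_inv_gt (t : ℝ) (ht : 1 ≤ t) : {x : ℝ | t < (1-x)⁻¹} = Ioo (1 - t⁻¹) 1 := by
  have ht0 : (0:ℝ) < t := lt_of_lt_of_le one_pos ht
  ext x
  simp only [mem_setOf_eq, mem_Ioo]
  constructor
  · intro h
    have h1x : 0 < 1 - x := by
      by_contra hcon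
      push_neg at hcon
      have : (1-x)⁻¹ ≤ 0 := inv_nonpos.mpr hcon
      linarith
    have h2 : 1 - x < t⁻¹ := by
      have := (inv_strictAnti₀ ht0 h)
      simpa [inv_inv] using this
    constructor <;> [linarith; linarith]
  · rintro ⟨h1, h2⟩
    have h1x : 0 < 1 - x := by linarith
    have h1xt : 1 - x < t⁻¹ := by linarith
    have := inv_strictAnti₀ h1x h1xt
    simpa [inv_inv] using this

set_option maxHeartbeats 2000000 in
/-- When the i.i.d. overlaps have density `f` with `f(1-x) = 1 + O(x^δ)` as `x → 0+`,
`S_n/(n log n) → 1` in probability, where `S_n = ∑_{i<n} 1/(1-p_i)`. -/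
theorem stmt_3 {Ω : Type*} [MeasureSpace Ω] [IsProbabilityMeasure (ℙ : Measure Ω)]
    (δ : ℝ) (hδ : 0 < δ)
    (p : ℕ → Ω → ℝ) (hmeas : ∀ i, Measurable (p i))
    (hindep : iIndepFun p ℙ)
    (hident : ∀ i, Measure.map (p i) ℙ = Measure.map (p 0) ℙ)
    (hrange : ∀ i ω, p i ω ∈ Set.Icc (0 : ℝ) 1)
    (f : ℝ → ℝ)
    (hf : Measure.map (p 0) ℙ
      = MeasureTheory.volume.withDensity (fun x => ENNReal.ofReal (f x)))
    (hasymp : (fun x => f (1 - x) - 1)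
      =O[nhdsWithin 0 (Set.Ioi (0 : ℝ))] (fun x => x ^ δ)) :
    ∀ ε > 0, Tendsto
      (fun n : ℕ => ℙ {ω | ε <
        |(∑ i ∈ Finset.range n, 1 / (1 - p i ω)) / (n * Real.log n) - 1|})
      atTop (nhds 0) := by
  intro ε hε
  set ν : Measure ℝ := Measure.map (p 0) ℙ with hνdef
  haveI hνprob : IsProbabilityMeasure ν := Measure.isProbabilityMeasure_map (hmeas 0).aemeasurable
  have hsupp : ∀ᵐ x ∂ν, x ∈ Icc (0:ℝ) 1 :=
    (ae_map_iff (hmeas 0).aemeasurable measurableSet_Icc).mpr (ae_of_all _ (hrange 0))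
  set η : ℝ := min (ε/4) (1/2) with hηdef
  have hη0 : 0 < η := lt_min (by linarith) (by norm_num)
  have hη1 : η ≤ 1 := le_trans (min_le_right _ _) (by norm_num)
  have hηε : η ≤ ε/4 := min_le_left _ _
  -- threshold t₀
  obtain ⟨C, hC0, hCb⟩ := hasymp.exists_pos
  rw [isBigOWith_iff, eventually_nhdsWithin_iff, Metric.eventually_nhds_iff] at hCb
  obtain ⟨r, hr0, hrb⟩ := hCb
  set t₀ : ℝ := min (r/2) (min 1 ((η/C) ^ (δ⁻¹ : ℝ))) with ht₀def
  have hηC : (0:ℝ) < η/C := div_pos hη0 hC0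
  have ht₀0 : 0 < t₀ :=
    lt_min (by linarith) (lt_min one_pos (Real.rpow_pos_of_pos hηC _))
  have ht₀1 : t₀ ≤ 1 := le_trans (min_le_right _ _) (min_le_left _ _)
  have hb : ∀ u ∈ Ioo (0:ℝ) t₀, |f (1 - u) - 1| ≤ η := by
    intro u hu
    have hu0 : 0 < u := hu.1
    have hur : dist u 0 < r := by
      rw [Real.dist_eq, sub_zero, abs_of_pos hu0]
      calc u < t₀ := hu.2
        _ ≤ r/2 := min_le_left _ _
        _ < r := by linarith
    have hbound := hrb hur hu0
    rw [Real.norm_eq_abs, Real.norm_eq_abs] at hbound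
    have hupow : |u ^ δ| = u ^ δ := abs_of_nonneg (Real.rpow_nonneg hu0.le _)
    rw [hupow] at hbound
    refine le_trans hbound ?_
    have hut : u ≤ (η/C) ^ (δ⁻¹ : ℝ) :=
      le_trans hu.2.le (le_trans (min_le_right _ _) (min_le_right _ _))
    have hpow : u ^ δ ≤ η / C := by
      calc u ^ δ ≤ ((η/C) ^ (δ⁻¹ : ℝ)) ^ δ :=
            Real.rpow_le_rpow hu0.le hut hδ.le
        _ = (η/C) ^ (δ⁻¹ * δ) := by rw [← Real.rpow_mul hηC.le]
        _ = η / C := by rw [inv_mul_cancel₀ (ne_of_gt hδ), Real.rpow_one]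
    calc C * u ^ δ ≤ C * (η/C) := by nlinarith
      _ = η := by field_simp
  have htail := tail_bound ν f hf η t₀ ht₀0 hb
  set T₀ : ℝ := max 1 t₀⁻¹ with hT₀def
  have hT₀1 : (1:ℝ) ≤ T₀ := le_max_left _ _
  have hT₀0 : (0:ℝ) < T₀ := lt_of_lt_of_le one_pos hT₀1
  have hinvt₀ : ∀ t : ℝ, T₀ ≤ t → t⁻¹ ≤ t₀ := by
    intro t ht
    have ht' : t₀⁻¹ ≤ t := le_trans (le_max_right _ _) ht
    rw [← inv_inv t₀]
    exact inv_anti₀ (inv_pos.mpr ht₀0) ht'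
  -- sequences
  set Kf : ℕ → ℝ := fun n => n * Real.sqrt (Real.log n) with hKdef
  set m : ℕ → ℝ := fun n => ∫ x, min (1-x)⁻¹ (Kf n) ∂ν with hmdef
  have hlogn : Tendsto (fun n : ℕ => Real.log n) atTop atTop :=
    Real.tendsto_log_atTop.comp tendsto_natCast_atTop_atTop
  have hsqrt : Tendsto Real.sqrt atTop atTop := by
    apply (tendsto_rpow_atTop (show (0:ℝ) < 1/2 by norm_num)).congr'
    filter_upwards with x
    rw [Real.sqrt_eq_rpow]
  have hsqrtlog : Tendsto (fun n : ℕ => Real.sqrt (Real.log n)) atTop atTop :=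
    hsqrt.comp hlogn
  have hKtop : Tendsto Kf atTop atTop :=
    Tendsto.atTop_mul_atTop₀ tendsto_natCast_atTop_atTop hsqrtlog
  have hlogK : ∀ᶠ n : ℕ in atTop,
      Real.log (Kf n) = Real.log n + (1/2) * Real.log (Real.log n) := by
    filter_upwards [hlogn.eventually_ge_atTop 1, eventually_ge_atTop 1] with n hln hn1
    have hn0 : (0:ℝ) < n := by exact_mod_cast Nat.lt_of_lt_of_le Nat.zero_lt_one hn1
    have hL0 : (0:ℝ) < Real.log n := lt_of_lt_of_le one_pos hln
    have hs0 : 0 < Real.sqrt (Real.log n) := Real.sqrt_pos.mpr hL0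
    rw [hKdef]
    simp only
    rw [Real.log_mul (ne_of_gt hn0) (ne_of_gt hs0), Real.log_sqrt hL0.le]
    ring
  have hloglog : Tendsto (fun n : ℕ => Real.log (Real.log n) / Real.log n) atTop (𝓝 0) :=
    (Real.isLittleO_log_id_atTop.tendsto_div_nhds_zero).comp hlogn
  have hlogKratio : Tendsto (fun n : ℕ => Real.log (Kf n) / Real.log n) atTop (𝓝 1) := by
    have h1 : Tendsto (fun n : ℕ => 1 + (1/2) * (Real.log (Real.log n) / Real.log n))
        atTop (𝓝 1) := by
      simpa using (hloglog.const_mul (1/2:ℝ)).const_add 1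
    apply h1.congr'
    filter_upwards [hlogK, hlogn.eventually_ge_atTop 1] with n hK hln
    have hL0 : Real.log n ≠ 0 := ne_of_gt (lt_of_lt_of_le one_pos hln)
    rw [hK, add_div, div_self hL0, mul_div_assoc]
  have hlogT : Tendsto (fun n : ℕ => Real.log T₀ / Real.log n) atTop (𝓝 0) :=
    tendsto_const_nhds.div_atTop hlogn
  have hT₀div : Tendsto (fun n : ℕ => T₀ / Real.log n) atTop (𝓝 0) :=
    tendsto_const_nhds.div_atTop hlogn
  have hLl : Tendsto (fun n : ℕ => (1-η) * (Real.log (Kf n) - Real.log T₀) / Real.log n)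
      atTop (𝓝 (1-η)) := by
    have h := (hlogKratio.sub hlogT).const_mul (1-η)
    simp only [sub_zero, mul_one] at h
    apply h.congr
    intro n
    rw [mul_div_assoc, sub_div]
  have hLu : Tendsto (fun n : ℕ =>
      (T₀ + (1+η) * (Real.log (Kf n) - Real.log T₀)) / Real.log n) atTop (𝓝 (1+η)) := by
    have h := hT₀div.add ((hlogKratio.sub hlogT).const_mul (1+η))
    simp only [sub_zero, mul_one, zero_add] at h
    apply h.congr
    intro n
    rw [add_div, mul_div_assoc, sub_div]
  have hεη : 1 - ε/2 < 1 - η := by linarith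
  have hεη' : 1 + η < 1 + ε/2 := by linarith
  have he1 : ∀ᶠ n : ℕ in atTop,
      (1 - ε/2) * Real.log n ≤ (1-η) * (Real.log (Kf n) - Real.log T₀) := by
    filter_upwards [hLl.eventually (eventually_ge_nhds hεη), hlogn.eventually_gt_atTop 0]
      with n h1 h2
    rw [le_div_iff₀ h2] at h1
    exact h1
  have he2 : ∀ᶠ n : ℕ in atTop,
      T₀ + (1+η) * (Real.log (Kf n) - Real.log T₀) ≤ (1 + ε/2) * Real.log n := by
    filter_upwards [hLu.eventually (eventually_le_nhds hεη'), hlogn.eventually_gt_atTop 0]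
      with n h1 h2
    rw [div_le_iff₀ h2] at h1
    exact h1
  set cs : ℕ → ℝ := fun n => (ε/2) * (n * Real.log n) with hcdef
  set W1 : ℕ → ℝ := fun n => n * ((1+η) * (Kf n)⁻¹) with hW1def
  set W2 : ℕ → ℝ := fun n => (n * (Kf n * ((1+ε/2) * Real.log n))) / (cs n)^2 with hW2def
  have hmain : ∀ᶠ n : ℕ in atTop, ℙ {ω | ε <
      |(∑ i ∈ Finset.range n, 1 / (1 - p i ω)) / (n * Real.log n) - 1|}
      ≤ ENNReal.ofReal (W1 n) + ENNReal.ofReal (W2 n) := by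
    filter_upwards [eventually_ge_atTop 1, hlogn.eventually_ge_atTop 1,
      hKtop.eventually_ge_atTop T₀, he1, he2] with n hn1 hln hKT₀ he1n he2n
    have hn0 : (0:ℝ) < n := by exact_mod_cast Nat.lt_of_lt_of_le Nat.zero_lt_one hn1
    have hL0 : (0:ℝ) < Real.log n := lt_of_lt_of_le one_pos hln
    have hK1 : (1:ℝ) ≤ Kf n := le_trans hT₀1 hKT₀
    have hK0 : (0:ℝ) < Kf n := lt_of_lt_of_le one_pos hK1
    have hKinv : (Kf n)⁻¹ ≤ t₀ := hinvt₀ _ hKT₀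
    have hb0 : (0:ℝ) < n * Real.log n := mul_pos hn0 hL0
    have hc0 : 0 < cs n := mul_pos (by linarith) hb0
    -- mean bounds for this n
    have htailK : ∀ t, T₀ ≤ t → t < Kf n →
        ENNReal.ofReal ((1-η)/t) ≤ ν {x | t < min (1-x)⁻¹ (Kf n)} ∧
        ν {x | t < min (1-x)⁻¹ (Kf n)} ≤ ENNReal.ofReal ((1+η)/t) := by
      intro t ht htK
      have ht1 : (1:ℝ) ≤ t := le_trans hT₀1 ht
      have ht0 : (0:ℝ) < t := lt_of_lt_of_le one_pos ht1
      have hset : {x : ℝ | t < min (1-x)⁻¹ (Kf n)} = Ioo (1 - t⁻¹) 1 := by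
        rw [← set_inv_gt t ht1]
        ext x
        simp only [mem_setOf_eq, lt_min_iff, htK, and_true]
      have hs : t⁻¹ ∈ Ioc (0:ℝ) t₀ := ⟨inv_pos.mpr ht0, hinvt₀ t ht⟩
      obtain ⟨h1, h2⟩ := htail t⁻¹ hs
      rw [hset]
      rw [div_eq_mul_inv (1-η) t, div_eq_mul_inv (1+η) t]
      exact ⟨h1, h2⟩
    have hmean := mean_bound ν hsupp (Kf n) T₀ η hT₀1 hKT₀ hη0.le hη1 htailK
    have hm_low : (1 - ε/2) * Real.log n ≤ m n := le_trans he1n hmean.1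
    have hm_up : m n ≤ (1 + ε/2) * Real.log n := le_trans hmean.2 he2n
    have hm_close : |m n - Real.log n| ≤ (ε/2) * Real.log n := by
      rw [abs_le]
      constructor <;> nlinarith
    -- random variables
    set Y : ℝ → ℝ := fun x => min (1-x)⁻¹ (Kf n) with hYdef
    have hYm : Measurable Y := ((measurable_const.sub measurable_id).inv).min measurable_const
    set Z : ℕ → Ω → ℝ := fun i => Y ∘ p i with hZdef
    have hZmeas : ∀ i, Measurable (Z i) := fun i => hYm.comp (hmeas i)
    have hZ0 : ∀ i ω, 0 ≤ Z i ω := fun i ω =>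
      le_min (inv_nonneg.mpr (by linarith [(hrange i ω).2])) hK0.le
    have hZK : ∀ i ω, Z i ω ≤ Kf n := fun i ω => min_le_right _ _
    have hZ2 : ∀ i, MemLp (Z i) 2 ℙ := fun i =>
      MemLp.of_bound (hZmeas i).aestronglyMeasurable (Kf n)
        (ae_of_all _ fun ω => by
          rw [Real.norm_eq_abs, abs_of_nonneg (hZ0 i ω)]; exact hZK i ω)
    have hZint : ∀ i, Integrable (Z i) ℙ := fun i => (hZ2 i).integrable one_le_two
    have hZexp : ∀ i, 𝔼[Z i] = m n := by
      intro i
      calc 𝔼[Z i] = ∫ x, Y x ∂(Measure.map (p i) ℙ) :=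
            (integral_map (hmeas i).aemeasurable hYm.aestronglyMeasurable).symm
        _ = m n := by rw [hident i]
    have hZsq : ∀ i, 𝔼[(Z i)^2] ≤ Kf n * m n := by
      intro i
      have hint1 : Integrable ((Z i)^2) ℙ := (hZ2 i).integrable_sq
      have hint2 : Integrable (fun ω => Kf n * Z i ω) ℙ := (hZint i).const_mul _
      have hle : (Z i)^2 ≤ fun ω => Kf n * Z i ω := by
        intro ω
        have h0 := hZ0 i ω
        have hK := hZK i ω
        simp only [Pi.pow_apply]
        nlinarith
      calc 𝔼[(Z i)^2] ≤ ∫ ω, Kf n * Z i ω ∂ℙ := integral_mono hint1 hint2 hle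
        _ = Kf n * 𝔼[Z i] := integral_const_mul _ _
        _ = Kf n * m n := by rw [hZexp i]
    have hZvar : ∀ i, Var[Z i] ≤ Kf n * m n := by
      intro i
      rw [variance_eq_sub (hZ2 i)]
      have h1 := sq_nonneg (𝔼[Z i])
      linarith [hZsq i]
    set T : Ω → ℝ := fun ω => ∑ i ∈ Finset.range n, Z i ω with hTdef
    have hT2 : MemLp T 2 ℙ := memLp_finsetSum _ (fun i _ => hZ2 i)
    have hTexp : 𝔼[T] = n * m n := by
      rw [hTdef]
      rw [integral_finset_sum _ (fun i _ => hZint i)]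
      simp only [hZexp]
      rw [Finset.sum_const, Finset.card_range, nsmul_eq_mul]
    have hpair : Set.Pairwise ↑(Finset.range n) fun i j => IndepFun (Z i) (Z j) ℙ :=
      fun i _ j _ hij => (hindep.indepFun hij).comp hYm hYm
    have hTvar : Var[T] ≤ n * (Kf n * m n) := by
      have hTeq : T = ∑ i ∈ Finset.range n, Z i := by
        funext ω
        rw [hTdef, Finset.sum_apply]
      rw [hTeq, IndepFun.variance_sum (fun i _ => hZ2 i) hpair]
      calc ∑ i ∈ Finset.range n, Var[Z i] ≤ ∑ _i ∈ Finset.range n, Kf n * m n :=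
            Finset.sum_le_sum (fun i _ => hZvar i)
        _ = n * (Kf n * m n) := by rw [Finset.sum_const, Finset.card_range, nsmul_eq_mul]
    -- tail events
    have hone : ∀ i, ℙ {ω | Kf n < (1 - p i ω)⁻¹} ≤ ENNReal.ofReal ((1+η) * (Kf n)⁻¹) := by
      intro i
      have hset : {ω | Kf n < (1 - p i ω)⁻¹} = p i ⁻¹' {x | Kf n < (1-x)⁻¹} := rfl
      rw [hset, set_inv_gt (Kf n) hK1, ← Measure.map_apply (hmeas i) measurableSet_Ioo,
        hident i]
      exact (htail _ ⟨inv_pos.mpr hK0, hKinv⟩).2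
    have hU : ℙ (⋃ i ∈ Finset.range n, {ω | Kf n < (1 - p i ω)⁻¹})
        ≤ ENNReal.ofReal (W1 n) := by
      refine le_trans (measure_biUnion_finset_le _ _) ?_
      calc ∑ i ∈ Finset.range n, ℙ {ω | Kf n < (1 - p i ω)⁻¹}
          ≤ ∑ _i ∈ Finset.range n, ENNReal.ofReal ((1+η) * (Kf n)⁻¹) :=
            Finset.sum_le_sum (fun i _ => hone i)
        _ = (n : ENNReal) * ENNReal.ofReal ((1+η) * (Kf n)⁻¹) := by
            rw [Finset.sum_const, Finset.card_range, nsmul_eq_mul]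
        _ = ENNReal.ofReal (W1 n) := by
            rw [← ENNReal.ofReal_natCast n, ← ENNReal.ofReal_mul (Nat.cast_nonneg n)]
    have hcheb := meas_ge_le_variance_div_sq (μ := ℙ) hT2 hc0
    have hV : ℙ {ω | cs n ≤ |T ω - 𝔼[T]|} ≤ ENNReal.ofReal (W2 n) := by
      refine le_trans hcheb (ENNReal.ofReal_le_ofReal ?_)
      rw [hW2def]
      apply (div_le_div_iff_of_pos_right (pow_pos hc0 2)).mpr
      calc Var[T] ≤ n * (Kf n * m n) := hTvar
        _ ≤ n * (Kf n * ((1 + ε/2) * Real.log n)) := by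
            apply mul_le_mul_of_nonneg_left _ hn0.le
            exact mul_le_mul_of_nonneg_left hm_up hK0.le
    -- inclusion
    have hincl : {ω | ε < |(∑ i ∈ Finset.range n, 1 / (1 - p i ω)) / (n * Real.log n) - 1|}
        ⊆ (⋃ i ∈ Finset.range n, {ω | Kf n < (1 - p i ω)⁻¹}) ∪ {ω | cs n ≤ |T ω - 𝔼[T]|} := by
      intro ω hω
      simp only [mem_setOf_eq] at hω
      by_contra hcon
      simp only [mem_union, mem_iUnion, mem_setOf_eq, not_or, not_exists, not_lt, not_le,
        exists_prop] at hcon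
      obtain ⟨hU', hV'⟩ := hcon
      have hST : (∑ i ∈ Finset.range n, 1 / (1 - p i ω)) = T ω := by
        rw [hTdef]
        apply Finset.sum_congr rfl
        intro i hi
        rw [one_div]
        have hle : (1 - p i ω)⁻¹ ≤ Kf n := by
          by_contra hlt
          push_neg at hlt
          exact hU' i ⟨hi, hlt⟩
        exact (min_eq_left hle).symm
      rw [hST] at hω
      have h1 : |T ω - n * m n| < cs n := by rw [← hTexp]; exact hV'
      have h2 : |(n:ℝ) * m n - n * Real.log n| ≤ (ε/2) * (n * Real.log n) := by
        rw [show (n:ℝ) * m n - n * Real.log n = n * (m n - Real.log n) by ring, abs_mul,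
          abs_of_nonneg hn0.le]
        calc (n:ℝ) * |m n - Real.log n| ≤ n * ((ε/2) * Real.log n) :=
              mul_le_mul_of_nonneg_left hm_close hn0.le
          _ = (ε/2) * (n * Real.log n) := by ring
      have h3 : |T ω - n * Real.log n| < ε * (n * Real.log n) := by
        calc |T ω - n * Real.log n| ≤ |T ω - n * m n| + |(n:ℝ) * m n - n * Real.log n| :=
              abs_sub_le _ _ _
          _ < cs n + (ε/2) * (n * Real.log n) := by linarith
          _ = ε * (n * Real.log n) := by rw [hcdef]; ring
      have h4 : |T ω / ((n:ℝ) * Real.log n) - 1| < ε := by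
        rw [show T ω / ((n:ℝ) * Real.log n) - 1 = (T ω - n * Real.log n)/(n * Real.log n) by
          field_simp]
        rw [abs_div, abs_of_pos hb0, div_lt_iff₀ hb0]
        linarith
      linarith
    calc ℙ {ω | ε < |(∑ i ∈ Finset.range n, 1 / (1 - p i ω)) / (n * Real.log n) - 1|}
        ≤ ℙ ((⋃ i ∈ Finset.range n, {ω | Kf n < (1 - p i ω)⁻¹}) ∪ {ω | cs n ≤ |T ω - 𝔼[T]|}) :=
          measure_mono hincl
      _ ≤ ℙ (⋃ i ∈ Finset.range n, {ω | Kf n < (1 - p i ω)⁻¹}) + ℙ {ω | cs n ≤ |T ω - 𝔼[T]|} :=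
          measure_union_le _ _
      _ ≤ ENNReal.ofReal (W1 n) + ENNReal.ofReal (W2 n) := add_le_add hU hV
  -- limits of the bounds
  have hW1lim : Tendsto (fun n => ENNReal.ofReal (W1 n)) atTop (𝓝 0) := by
    have h0 : (0:ENNReal) = ENNReal.ofReal 0 := by simp
    rw [h0]
    apply ENNReal.tendsto_ofReal
    have base : Tendsto (fun n : ℕ => (1+η) * (Real.sqrt (Real.log n))⁻¹) atTop (𝓝 0) := by
      simpa using (tendsto_inv_atTop_zero.comp hsqrtlog).const_mul (1+η)
    apply base.congr'
    filter_upwards [eventually_ge_atTop 1, hlogn.eventually_ge_atTop 1] with n hn1 hln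
    have hn0 : (0:ℝ) < n := by exact_mod_cast Nat.lt_of_lt_of_le Nat.zero_lt_one hn1
    have hs0 : 0 < Real.sqrt (Real.log n) := Real.sqrt_pos.mpr (lt_of_lt_of_le one_pos hln)
    rw [hW1def, hKdef]
    simp only
    field_simp
  have hW2lim : Tendsto (fun n => ENNReal.ofReal (W2 n)) atTop (𝓝 0) := by
    have h0 : (0:ENNReal) = ENNReal.ofReal 0 := by simp
    rw [h0]
    apply ENNReal.tendsto_ofReal
    have base : Tendsto (fun n : ℕ =>
        ((1+ε/2)/((ε/2)^2)) * (Real.sqrt (Real.log n))⁻¹) atTop (𝓝 0) := by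
      simpa using (tendsto_inv_atTop_zero.comp hsqrtlog).const_mul ((1+ε/2)/((ε/2)^2))
    apply base.congr'
    filter_upwards [eventually_ge_atTop 1, hlogn.eventually_ge_atTop 1] with n hn1 hln
    have hn0 : (0:ℝ) < n := by exact_mod_cast Nat.lt_of_lt_of_le Nat.zero_lt_one hn1
    have hL0 : (0:ℝ) < Real.log n := lt_of_lt_of_le one_pos hln
    have hs0 : 0 < Real.sqrt (Real.log n) := Real.sqrt_pos.mpr hL0
    have hsq : Real.sqrt (Real.log n) * Real.sqrt (Real.log n) = Real.log n :=
      Real.mul_self_sqrt hL0.le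
    rw [hW2def, hcdef, hKdef]
    simp only
    set s := Real.sqrt (Real.log (n:ℝ)) with hsdef
    rw [← hsq]
    field_simp
  have hsum : Tendsto (fun n => ENNReal.ofReal (W1 n) + ENNReal.ofReal (W2 n)) atTop (𝓝 0) := by
    simpa using hW1lim.add hW2lim
  apply tendsto_of_tendsto_of_tendsto_of_le_of_le' tendsto_const_nhds hsum
  · filter_upwards with n
    exact bot_le
  · exact hmain
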